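/- arXiv:2301.09696 — 2 statements merged into one kernel-verified Lean document; each statement's English description precedes it below -/
import Mathlib

section
/- For the convex function φ_JS(x) = x·log x − (1+x)·log((1+x)/2) on (0,∞), as x → ∞ we have φ_JS(x) = −log x + x·log 2 − 1 + log 2 + O(1/x); that is, φ_JS differs from φ_revKL(x) = −log x by an affine function of x up to O(1/x) error. -/
open Real Filter Asymptotics

/-- As x → ∞, φ_JS(x) = −log x + x·log 2 − 1 + log 2 + O(1/x). -/
theorem phiJS_expansion_at_top :
    (fun x : ℝ =>
        (x * Real.log x - (1 + x) * Real.log ((1 + x) / 2))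
          - (-Real.log x + x * Real.log 2 - 1 + Real.log 2))
      =O[atTop] (fun x : ℝ => 1 / x) := by
  rw [isBigO_iff]
  refine ⟨1, ?_⟩
  filter_upwards [eventually_ge_atTop (1 : ℝ)] with x hx
  have hx0 : (0 : ℝ) < x := by linarith
  have hx1 : (0 : ℝ) < 1 + x := by linarith
  set L : ℝ := Real.log (1 + x) - Real.log x with hL
  have hE : (x * Real.log x - (1 + x) * Real.log ((1 + x) / 2))
      - (-Real.log x + x * Real.log 2 - 1 + Real.log 2)
      = 1 - (1 + x) * L := by
    rw [Real.log_div (by positivity) (by norm_num), hL]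
    ring
  have hLeq : L = Real.log ((1 + x) / x) := by
    rw [Real.log_div (by positivity) (by positivity)]
  have hq : (0 : ℝ) < (1 + x) / x := by positivity
  have hU : L ≤ 1 / x := by
    have := Real.log_le_sub_one_of_pos hq
    rw [hLeq]
    have : (1 + x) / x - 1 = 1 / x := by field_simp; ring
    linarith [Real.log_le_sub_one_of_pos hq, this]
  have hLo : 1 / (1 + x) ≤ L := by
    have h := Real.one_sub_inv_le_log_of_pos hq
    rw [hLeq]
    have hinv : ((1 + x) / x)⁻¹ = x / (1 + x) := by
      rw [inv_div]
    have : 1 - x / (1 + x) = 1 / (1 + x) := by field_simp; ring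
    rw [hinv] at h
    linarith
  rw [hE]
  have h1 : (1 + x) * L ≥ 1 := by
    have := mul_le_mul_of_nonneg_left hLo (le_of_lt hx1)
    calc (1:ℝ) = (1 + x) * (1 / (1 + x)) := by field_simp
    _ ≤ (1 + x) * L := this
  have h2 : (1 + x) * L ≤ 1 + 1 / x := by
    have := mul_le_mul_of_nonneg_left hU (le_of_lt hx1)
    have hxx : (1 + x) * (1 / x) = 1 / x + 1 := by field_simp
    calc (1 + x) * L ≤ (1 + x) * (1 / x) := this
    _ = 1 + 1 / x := by rw [hxx]; ring
  have hxinv : (0:ℝ) < 1 / x := by positivity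
  rw [Real.norm_eq_abs, Real.norm_eq_abs, abs_of_nonpos (by linarith), abs_of_pos hxinv]
  simp only [one_mul]
  linarith
end

section
/- For fixed constants C > 0 and T > 0, the function ν ↦ ((1+ν)²)/(ν·T)·C on (0,∞) attains its unique minimum at ν = 1; consequently, when the noise distribution equals the data distribution (so the NCE asymptotic MSE is proportional to (1+ν)²/ν), the optimal noise proportion for a fixed total sample budget is 50%. -/
/-- The function ν ↦ ((1+ν)²/(νT))·C on (0,∞) attains its unique minimum at ν = 1:
with p_n = p_d, the optimal noise proportion for NCE is 50%. -/
theorem optimal_noise_proportion_half (C T : ℝ) (hC : 0 < C) (hT : 0 < T) :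
    (∀ ν ∈ Set.Ioi (0:ℝ),
      (1 + 1) ^ 2 / (1 * T) * C ≤ (1 + ν) ^ 2 / (ν * T) * C) ∧
    (∀ ν ∈ Set.Ioi (0:ℝ),
      (1 + ν) ^ 2 / (ν * T) * C = (1 + 1) ^ 2 / (1 * T) * C → ν = 1) := by
  constructor
  · intro ν hν
    have hν : (0:ℝ) < ν := hν
    have key : 4 * ν ≤ (1 + ν) ^ 2 := by nlinarith [sq_nonneg (ν - 1)]
    have h1 : (1 + 1 : ℝ) ^ 2 / (1 * T) = 4 / T := by ring
    rw [h1]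
    apply mul_le_mul_of_nonneg_right _ hC.le
    rw [div_le_div_iff₀ hT (by positivity)]
    nlinarith
  · intro ν hν heq
    have hν : (0:ℝ) < ν := hν
    have heq2 : (1 + ν) ^ 2 / (ν * T) = (1 + 1) ^ 2 / (1 * T) :=
      mul_right_cancel₀ hC.ne' heq
    have : (1 + ν) ^ 2 * (1 * T) = (1 + 1) ^ 2 * (ν * T) := by
      field_simp at heq2
      rw [heq2]; ring
    have h3 : (ν - 1) ^ 2 * T = 0 := by nlinarith
    have h4 : (ν - 1) ^ 2 = 0 := by
      rcases mul_eq_zero.mp h3 with h | h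
      · exact h
      · exact absurd h hT.ne'
    have := pow_eq_zero_iff (n := 2) (by norm_num) |>.mp h4
    linarith
end
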